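/- arXiv:1209.0515 — 7 statements merged into one kernel-verified Lean document; each statement's English description precedes it below -/
import Mathlib

section
/- The 4-belts of G_P are exactly the four vertex sets {b,c,d,e}, {a,c,e,i}, {b,c,e,i}, and {f,g,h,j}; in particular G_P has exactly four 4-belts. -/
/-- Edge list of the facet-intersection graph `G_P` of the polytope `𝒫`
(vertices: a=0, b=1, c=2, d=3, e=4, f=5, g=6, h=7, i=8, j=9, k=10). -/
def pEdgeList : List (Fin 11 × Fin 11) :=
  [(0,1),(0,2),(0,3),(0,4),(1,2),(1,4),(1,5),(1,6),(2,3),(2,6),(2,7),(2,8),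
   (3,4),(3,8),(4,5),(4,8),(4,9),(5,6),(5,9),(5,10),(6,7),(6,10),(7,8),(7,9),
   (7,10),(8,9),(9,10)]

/-- The facet-intersection graph `G_P` of the polytope `𝒫`. -/
def G_P : SimpleGraph (Fin 11) where
  Adj u v := (u, v) ∈ pEdgeList ∨ (v, u) ∈ pEdgeList
  symm := ⟨fun u v h => h.symm⟩
  loopless := ⟨by intro v; fin_cases v <;> decide⟩

instance : DecidableRel G_P.Adj :=
  fun u v => inferInstanceAs (Decidable ((u, v) ∈ pEdgeList ∨ (v, u) ∈ pEdgeList))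

/-- A 4-belt of a simple graph `G` is a 4-element vertex set that can be written as
`{w, x, y, z}` where `wx`, `xy`, `yz`, `zw` are edges of `G` while `wy`, `xz` are not. -/
def IsFourBelt {V : Type*} (G : SimpleGraph V) (B : Set V) : Prop :=
  ∃ w x y z : V, B = {w, x, y, z} ∧ B.ncard = 4 ∧
    G.Adj w x ∧ G.Adj x y ∧ G.Adj y z ∧ G.Adj z w ∧ ¬ G.Adj w y ∧ ¬ G.Adj x z

/-- The pair `{u, v}` is a diagonal of the 4-belt `B` of `G`. -/
def IsDiagonalOfBelt {V : Type*} (G : SimpleGraph V) (u v : V) (B : Set V) : Prop :=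
  ∃ w x y z : V, B = {w, x, y, z} ∧ B.ncard = 4 ∧
    G.Adj w x ∧ G.Adj x y ∧ G.Adj y z ∧ G.Adj z w ∧ ¬ G.Adj w y ∧ ¬ G.Adj x z ∧
    (({u, v} : Set V) = {w, y} ∨ ({u, v} : Set V) = {x, z})

/-- The pair `{u, v}` is a diagonal of some 4-belt of `G`. -/
def IsBeltDiagonal {V : Type*} (G : SimpleGraph V) (u v : V) : Prop :=
  ∃ B : Set V, IsDiagonalOfBelt G u v B

set_option synthInstance.maxHeartbeats 1000000 in
set_option synthInstance.maxSize 2000 in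
set_option maxHeartbeats 2000000 in
lemma key_belt : ∀ w x y z : Fin 11,
    ({w,x,y,z} : Finset (Fin 11)).card = 4 →
    G_P.Adj w x → G_P.Adj x y → G_P.Adj y z → G_P.Adj z w → ¬ G_P.Adj w y → ¬ G_P.Adj x z →
    ({w,x,y,z} : Finset (Fin 11)) = {1,2,3,4} ∨ ({w,x,y,z} : Finset (Fin 11)) = {0,2,4,8} ∨
    ({w,x,y,z} : Finset (Fin 11)) = {1,2,4,8} ∨ ({w,x,y,z} : Finset (Fin 11)) = {5,6,7,9} := by
  decide

lemma ncard_quad (a b c d : Fin 11) :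
    ({a, b, c, d} : Set (Fin 11)).ncard = ({a, b, c, d} : Finset (Fin 11)).card := by
  rw [show ({a, b, c, d} : Set (Fin 11)) = (({a, b, c, d} : Finset (Fin 11)) : Set (Fin 11)) by
    simp, Set.ncard_coe_finset]

lemma coe_ne {s t : Finset (Fin 11)} (h : s ≠ t) : (s : Set (Fin 11)) ≠ (t : Set (Fin 11)) :=
  fun he => h (Finset.coe_injective he)

/-- The 4-belts of `G_P` are exactly the four vertex sets {b,c,d,e}, {a,c,e,i},
{b,c,e,i} and {f,g,h,j}; in particular `G_P` has exactly four 4-belts. -/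
theorem stmt_4 :
    {B : Set (Fin 11) | IsFourBelt G_P B} =
      {({1, 2, 3, 4} : Set (Fin 11)), {0, 2, 4, 8}, {1, 2, 4, 8}, {5, 6, 7, 9}} ∧
    {B : Set (Fin 11) | IsFourBelt G_P B}.ncard = 4 := by
  have hmain : {B : Set (Fin 11) | IsFourBelt G_P B} =
      {({1, 2, 3, 4} : Set (Fin 11)), {0, 2, 4, 8}, {1, 2, 4, 8}, {5, 6, 7, 9}} := by
    ext B
    constructor
    · rintro ⟨w, x, y, z, hB, hcard, h1, h2, h3, h4, h5, h6⟩
      have hc : ({w, x, y, z} : Finset (Fin 11)).card = 4 := by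
        rw [← ncard_quad, ← hB]; exact hcard
      have := key_belt w x y z hc h1 h2 h3 h4 h5 h6
      have hBc : B = (({w, x, y, z} : Finset (Fin 11)) : Set (Fin 11)) := by
        rw [hB]; simp
      rcases this with h | h | h | h <;> rw [hBc, h] <;> simp [Set.insert_comm]
    · intro hB
      rcases hB with h | h | h | h <;> subst h
      · exact ⟨1, 2, 3, 4, rfl, by rw [ncard_quad]; decide,
          by decide, by decide, by decide, by decide, by decide, by decide⟩
      · exact ⟨0, 2, 8, 4, by ext a; simp; tauto, by rw [ncard_quad]; decide,
          by decide, by decide, by decide, by decide, by decide, by decide⟩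
      · exact ⟨1, 2, 8, 4, by ext a; simp; tauto, by rw [ncard_quad]; decide,
          by decide, by decide, by decide, by decide, by decide, by decide⟩
      · exact ⟨5, 6, 7, 9, rfl, by rw [ncard_quad]; decide,
          by decide, by decide, by decide, by decide, by decide, by decide⟩
  refine ⟨hmain, ?_⟩
  rw [hmain]
  have e1 : ({1, 2, 3, 4} : Set (Fin 11)) = (({1,2,3,4} : Finset (Fin 11)) : Set (Fin 11)) := by simp
  have e2 : ({0, 2, 4, 8} : Set (Fin 11)) = (({0,2,4,8} : Finset (Fin 11)) : Set (Fin 11)) := by simp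
  have e3 : ({1, 2, 4, 8} : Set (Fin 11)) = (({1,2,4,8} : Finset (Fin 11)) : Set (Fin 11)) := by simp
  have e4 : ({5, 6, 7, 9} : Set (Fin 11)) = (({5,6,7,9} : Finset (Fin 11)) : Set (Fin 11)) := by simp
  rw [e1, e2, e3, e4]
  rw [Set.ncard_insert_of_notMem (by
      simp only [Set.mem_insert_iff, Set.mem_singleton_iff]
      push_neg
      exact ⟨coe_ne (by decide), coe_ne (by decide), coe_ne (by decide)⟩)
    ((Set.finite_singleton _).insert _ |>.insert _),
    Set.ncard_insert_of_notMem (by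
      simp only [Set.mem_insert_iff, Set.mem_singleton_iff]
      push_neg
      exact ⟨coe_ne (by decide), coe_ne (by decide)⟩)
    ((Set.finite_singleton _).insert _),
    Set.ncard_insert_of_notMem (by
      simp only [Set.mem_singleton_iff]
      exact coe_ne (by decide))
    (Set.finite_singleton _),
    Set.ncard_singleton]
end

section
/- The set of non-adjacent vertex pairs of G_P that occur as a diagonal of some 4-belt of G_P is exactly the six pairs {b,d}, {c,e}, {a,i}, {b,i}, {f,h}, {g,j}. -/
/-- Decidable reformulation: `{u,v}` is a diagonal of a belt cycle `u - x - v - z - u`. -/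
abbrev QDiag (u v : Fin 11) : Prop :=
  ∃ x z : Fin 11, G_P.Adj u x ∧ G_P.Adj x v ∧ G_P.Adj v z ∧ G_P.Adj z u ∧
    ¬ G_P.Adj u v ∧ ¬ G_P.Adj x z ∧ u ≠ v ∧ x ≠ z

lemma ncard_triple_le {V : Type*} (a b c : V) : ({a, b, c} : Set V).ncard ≤ 3 := by
  calc ({a, b, c} : Set V).ncard ≤ ({b, c} : Set V).ncard + 1 := Set.ncard_insert_le _ _
    _ ≤ (({c} : Set V).ncard + 1) + 1 := by
        exact Nat.add_le_add_right (Set.ncard_insert_le _ _) 1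
    _ ≤ 3 := by rw [Set.ncard_singleton]

lemma ncard_four {a b c d : Fin 11} (hab : a ≠ b) (hac : a ≠ c) (had : a ≠ d)
    (hbc : b ≠ c) (hbd : b ≠ d) (hcd : c ≠ d) :
    ({a, b, c, d} : Set (Fin 11)).ncard = 4 := by
  rw [Set.ncard_insert_of_notMem (by simp [hab, hac, had]),
    Set.ncard_insert_of_notMem (by simp [hbc, hbd]),
    Set.ncard_insert_of_notMem (by simp [hcd]), Set.ncard_singleton]

lemma mem_pair_of_eq {V : Type*} {u v w y : V} (h : ({u, v} : Set V) = {w, y})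
    (huv : u ≠ v) : (u = w ∧ v = y) ∨ (u = y ∧ v = w) := by
  have hu : u = w ∨ u = y := by
    have : u ∈ ({w, y} : Set V) := h ▸ (by simp : u ∈ ({u, v} : Set V))
    simpa using this
  have hv : v = w ∨ v = y := by
    have : v ∈ ({w, y} : Set V) := h ▸ (by simp : v ∈ ({u, v} : Set V))
    simpa using this
  have hw : w = u ∨ w = v := by
    have : w ∈ ({u, v} : Set V) := h ▸ (by simp : w ∈ ({w, y} : Set V))
    simpa using this
  have hy : y = u ∨ y = v := by
    have : y ∈ ({u, v} : Set V) := h ▸ (by simp : y ∈ ({w, y} : Set V))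
    simpa using this
  rcases hu with rfl | rfl
  · rcases hv with rfl | rfl
    · exact absurd rfl huv
    · exact Or.inl ⟨rfl, rfl⟩
  · rcases hv with rfl | rfl
    · exact Or.inr ⟨rfl, rfl⟩
    · exact absurd rfl huv

lemma qdiag_of_belt {u v : Fin 11} (huv : u ≠ v) (h : IsBeltDiagonal G_P u v) :
    QDiag u v := by
  obtain ⟨B, w, x, y, z, hB, hcard, hwx, hxy, hyz, hzw, hwy, hxz, hpair⟩ := h
  have hwy' : w ≠ y := by
    rintro rfl
    have h3 : B.ncard ≤ 3 := by
      rw [hB, show ({w, x, w, z} : Set (Fin 11)) = {w, x, z} by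
        ext t; simp; tauto]
      exact ncard_triple_le _ _ _
    omega
  have hxz' : x ≠ z := by
    rintro rfl
    have h3 : B.ncard ≤ 3 := by
      rw [hB, show ({w, x, y, x} : Set (Fin 11)) = {w, x, y} by
        ext t; simp; tauto]
      exact ncard_triple_le _ _ _
    omega
  rcases hpair with hp | hp
  · rcases mem_pair_of_eq hp huv with ⟨rfl, rfl⟩ | ⟨rfl, rfl⟩
    · exact ⟨x, z, hwx, hxy, hyz, hzw, hwy, hxz, hwy', hxz'⟩
    · exact ⟨x, z, hxy.symm, hwx.symm, hzw.symm, hyz.symm, fun h => hwy h.symm, hxz,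
        hwy'.symm, hxz'⟩
  · rcases mem_pair_of_eq hp huv with ⟨rfl, rfl⟩ | ⟨rfl, rfl⟩
    · exact ⟨y, w, hxy, hyz, hzw, hwx, hxz, fun h => hwy h.symm, hxz', hwy'.symm⟩
    · exact ⟨y, w, hyz.symm, hxy.symm, hwx.symm, hzw.symm, fun h => hxz h.symm,
        fun h => hwy h.symm, hxz'.symm, hwy'.symm⟩

lemma qdiag_key : ∀ u v : Fin 11, QDiag u v →
    (u = 1 ∧ v = 3) ∨ (u = 3 ∧ v = 1) ∨ (u = 2 ∧ v = 4) ∨ (u = 4 ∧ v = 2) ∨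
    (u = 0 ∧ v = 8) ∨ (u = 8 ∧ v = 0) ∨ (u = 1 ∧ v = 8) ∨ (u = 8 ∧ v = 1) ∨
    (u = 5 ∧ v = 7) ∨ (u = 7 ∧ v = 5) ∨ (u = 6 ∧ v = 9) ∨ (u = 9 ∧ v = 6) := by
  decide

lemma belt_witness {w x y z : Fin 11} (hwx : G_P.Adj w x) (hxy : G_P.Adj x y)
    (hyz : G_P.Adj y z) (hzw : G_P.Adj z w) (hwy : ¬ G_P.Adj w y)
    (hxz : ¬ G_P.Adj x z) (hwy' : w ≠ y) (hxz' : x ≠ z) :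
    IsBeltDiagonal G_P w y := by
  refine ⟨{w, x, y, z}, w, x, y, z, rfl,
    ncard_four hwx.ne hwy' (G_P.ne_of_adj hzw).symm (G_P.ne_of_adj hxy) hxz'
      (G_P.ne_of_adj hyz), hwx, hxy, hyz, hzw, hwy, hxz, Or.inl rfl⟩

/-- The non-adjacent vertex pairs of `G_P` occurring as a diagonal of some 4-belt of
`G_P` are exactly the six pairs {b,d}, {c,e}, {a,i}, {b,i}, {f,h}, {g,j}. -/
theorem stmt_6 :
    {p : Set (Fin 11) | ∃ u v : Fin 11, u ≠ v ∧ ¬ G_P.Adj u v ∧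
        IsBeltDiagonal G_P u v ∧ p = {u, v}} =
      {({1, 3} : Set (Fin 11)), {2, 4}, {0, 8}, {1, 8}, {5, 7}, {6, 9}} := by
  ext p
  simp only [Set.mem_setOf_eq, Set.mem_insert_iff, Set.mem_singleton_iff]
  constructor
  · rintro ⟨u, v, hne, hna, hbd, rfl⟩
    have hq := qdiag_key u v (qdiag_of_belt hne hbd)
    rcases hq with ⟨rfl, rfl⟩ | ⟨rfl, rfl⟩ | ⟨rfl, rfl⟩ | ⟨rfl, rfl⟩ | ⟨rfl, rfl⟩ |
      ⟨rfl, rfl⟩ | ⟨rfl, rfl⟩ | ⟨rfl, rfl⟩ | ⟨rfl, rfl⟩ | ⟨rfl, rfl⟩ | ⟨rfl, rfl⟩ |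
      ⟨rfl, rfl⟩
    · exact Or.inl rfl
    · exact Or.inl (Set.pair_comm _ _)
    · exact Or.inr (Or.inl rfl)
    · exact Or.inr (Or.inl (Set.pair_comm _ _))
    · exact Or.inr (Or.inr (Or.inl rfl))
    · exact Or.inr (Or.inr (Or.inl (Set.pair_comm _ _)))
    · exact Or.inr (Or.inr (Or.inr (Or.inl rfl)))
    · exact Or.inr (Or.inr (Or.inr (Or.inl (Set.pair_comm _ _))))
    · exact Or.inr (Or.inr (Or.inr (Or.inr (Or.inl rfl))))
    · exact Or.inr (Or.inr (Or.inr (Or.inr (Or.inl (Set.pair_comm _ _)))))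
    · exact Or.inr (Or.inr (Or.inr (Or.inr (Or.inr rfl))))
    · exact Or.inr (Or.inr (Or.inr (Or.inr (Or.inr (Set.pair_comm _ _)))))
  · rintro (rfl | rfl | rfl | rfl | rfl | rfl)
    · exact ⟨1, 3, by decide, by decide,
        belt_witness (w := 1) (x := 2) (y := 3) (z := 4)
          (by decide) (by decide) (by decide) (by decide) (by decide) (by decide)
          (by decide) (by decide), rfl⟩
    · exact ⟨2, 4, by decide, by decide,
        belt_witness (w := 2) (x := 1) (y := 4) (z := 3)
          (by decide) (by decide) (by decide) (by decide) (by decide) (by decide)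
          (by decide) (by decide), rfl⟩
    · exact ⟨0, 8, by decide, by decide,
        belt_witness (w := 0) (x := 2) (y := 8) (z := 4)
          (by decide) (by decide) (by decide) (by decide) (by decide) (by decide)
          (by decide) (by decide), rfl⟩
    · exact ⟨1, 8, by decide, by decide,
        belt_witness (w := 1) (x := 2) (y := 8) (z := 4)
          (by decide) (by decide) (by decide) (by decide) (by decide) (by decide)
          (by decide) (by decide), rfl⟩
    · exact ⟨5, 7, by decide, by decide,
        belt_witness (w := 5) (x := 6) (y := 7) (z := 9)
          (by decide) (by decide) (by decide) (by decide) (by decide) (by decide)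
          (by decide) (by decide), rfl⟩
    · exact ⟨6, 9, by decide, by decide,
        belt_witness (w := 6) (x := 5) (y := 9) (z := 7)
          (by decide) (by decide) (by decide) (by decide) (by decide) (by decide)
          (by decide) (by decide), rfl⟩
end

section
/- Exactly 22 of the 28 non-adjacent unordered vertex pairs of G_P are not a diagonal of any 4-belt of G_P. -/
/-- Decidable reformulation of `IsBeltDiagonal G_P`. -/
def DiagP (u v : Fin 11) : Prop :=
  ∃ x z : Fin 11, u ≠ x ∧ u ≠ z ∧ v ≠ x ∧ v ≠ z ∧ x ≠ z ∧ u ≠ v ∧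
    G_P.Adj u x ∧ G_P.Adj x v ∧ G_P.Adj v z ∧ G_P.Adj z u ∧
    ¬ G_P.Adj u v ∧ ¬ G_P.Adj x z

instance : ∀ u v : Fin 11, Decidable (DiagP u v) := fun u v => by
  unfold DiagP; infer_instance

lemma ncard_le_three {α : Type*} (a b c : α) : ({a, b, c} : Set α).ncard ≤ 3 := by
  refine le_trans (Set.ncard_insert_le _ _) ?_
  have := Set.ncard_insert_le b ({c} : Set α)
  simp only [Set.ncard_singleton] at this
  omega

lemma ncard4_distinct {α : Type*} {w x y z : α}
    (h : ({w, x, y, z} : Set α).ncard = 4) :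
    w ≠ x ∧ w ≠ y ∧ w ≠ z ∧ x ≠ y ∧ x ≠ z ∧ y ≠ z := by
  refine ⟨fun h' => ?_, fun h' => ?_, fun h' => ?_, fun h' => ?_, fun h' => ?_, fun h' => ?_⟩
  · rw [h', show ({x, x, y, z} : Set α) = {x, y, z} by ext t; simp] at h
    have := ncard_le_three x y z; omega
  · rw [h', show ({y, x, y, z} : Set α) = {y, x, z} by ext t; simp; tauto] at h
    have := ncard_le_three y x z; omega
  · rw [h', show ({z, x, y, z} : Set α) = {z, x, y} by ext t; simp; tauto] at h
    have := ncard_le_three z x y; omega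
  · rw [h', show ({w, y, y, z} : Set α) = {w, y, z} by ext t; simp] at h
    have := ncard_le_three w y z; omega
  · rw [h', show ({w, z, y, z} : Set α) = {w, z, y} by ext t; simp; tauto] at h
    have := ncard_le_three w z y; omega
  · rw [h', show ({w, x, z, z} : Set α) = {w, x, z} by ext t; simp] at h
    have := ncard_le_three w x z; omega

lemma ncard4_of_distinct {w x y z : Fin 11} (hwx : w ≠ x) (hwy : w ≠ y) (hwz : w ≠ z)
    (hxy : x ≠ y) (hxz : x ≠ z) (hyz : y ≠ z) :
    ({w, x, y, z} : Set (Fin 11)).ncard = 4 := by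
  rw [Set.ncard_insert_of_notMem (by simp [hwx, hwy, hwz]),
      Set.ncard_insert_of_notMem (by simp [hxy, hxz]),
      Set.ncard_pair hyz]

lemma belt_iff (u v : Fin 11) : IsBeltDiagonal G_P u v ↔ DiagP u v := by
  constructor
  · rintro ⟨B, w, x, y, z, hB, hcard, h1, h2, h3, h4, h5, h6, hd⟩
    rw [hB] at hcard
    obtain ⟨hwx, hwy, hwz, hxy, hxz, hyz⟩ := ncard4_distinct hcard
    rcases hd with hd | hd <;> rcases Set.pair_eq_pair_iff.mp hd with ⟨rfl, rfl⟩ | ⟨rfl, rfl⟩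
    · exact ⟨x, z, hwx, hwz, hxy.symm, hyz, hxz, hwy, h1, h2, h3, h4, h5, h6⟩
    · exact ⟨x, z, hxy.symm, hyz, hwx, hwz, hxz, hwy.symm,
        h2.symm, h1.symm, h4.symm, h3.symm, fun h => h5 h.symm, h6⟩
    · exact ⟨y, w, hxy, hwx.symm, hyz.symm, hwz.symm, hwy.symm, hxz,
        h2, h3, h4, h1, h6, fun h => h5 h.symm⟩
    · exact ⟨y, w, hyz.symm, hwz.symm, hxy, hwx.symm, hwy.symm, hxz.symm,
        h3.symm, h2.symm, h1.symm, h4.symm, fun h => h6 h.symm, fun h => h5 h.symm⟩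
  · rintro ⟨x, z, hux, huz, hvx, hvz, hxz, huv, h1, h2, h3, h4, h5, h6⟩
    exact ⟨{u, x, v, z}, u, x, v, z, rfl,
      ncard4_of_distinct hux huv huz hvx.symm hxz hvz,
      h1, h2, h3, h4, h5, h6, Or.inl rfl⟩

/-- The finset of good pairs. -/
def TsetP : Finset (Finset (Fin 11)) :=
  (Finset.univ.filter (fun p : Fin 11 × Fin 11 =>
    p.1 ≠ p.2 ∧ ¬ G_P.Adj p.1 p.2 ∧ ¬ DiagP p.1 p.2)).image (fun p => {p.1, p.2})

/-- Exactly 22 of the 28 non-adjacent unordered vertex pairs of `G_P` are not a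
diagonal of any 4-belt of `G_P`. -/
theorem stmt_8 :
    {p : Set (Fin 11) | ∃ u v : Fin 11, u ≠ v ∧ ¬ G_P.Adj u v ∧
        ¬ IsBeltDiagonal G_P u v ∧ p = {u, v}}.ncard = 22 := by
  have hset : {p : Set (Fin 11) | ∃ u v : Fin 11, u ≠ v ∧ ¬ G_P.Adj u v ∧
      ¬ IsBeltDiagonal G_P u v ∧ p = {u, v}} =
      ((↑) : Finset (Fin 11) → Set (Fin 11)) '' ↑TsetP := by
    ext p
    simp only [Set.mem_setOf_eq, Set.mem_image, Finset.mem_coe, TsetP, Finset.mem_image,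
      Finset.mem_filter, Finset.mem_univ, true_and]
    constructor
    · rintro ⟨u, v, hne, hadj, hbelt, rfl⟩
      exact ⟨{u, v}, ⟨(u, v), ⟨hne, hadj, fun hD => hbelt ((belt_iff u v).mpr hD)⟩, rfl⟩,
        by simp⟩
    · rintro ⟨s, ⟨⟨u, v⟩, ⟨hne, hadj, hD⟩, rfl⟩, rfl⟩
      exact ⟨u, v, hne, hadj, fun hb => hD ((belt_iff u v).mp hb), by simp⟩
  rw [hset, Set.ncard_image_of_injective _ Finset.coe_injective, Set.ncard_coe_finset]
  decide
end

section
/- There is no graph isomorphism between G_P and G_Q; that is, no bijection of Fin 11 to itself maps the edge set of G_P onto the edge set of G_Q. Consequently the polytopes 𝒫 and 𝒬 are not combinatorially equivalent. -/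
/-- Edge list of the facet-intersection graph `G_Q` of the polytope `𝒬`
(vertices: a=0, b=1, c=2, d=3, e=4, f=5, g=6, h=7, i=8, j=9, k=10). -/
def qEdgeList : List (Fin 11 × Fin 11) :=
  [(0,1),(0,2),(0,3),(0,4),(0,5),(1,2),(1,5),(1,6),(2,3),(2,6),(2,7),(2,8),
   (3,4),(3,8),(3,9),(4,5),(4,9),(5,6),(5,9),(5,10),(6,7),(6,10),(7,8),(7,9),
   (7,10),(8,9),(9,10)]

/-- The facet-intersection graph `G_Q` of the polytope `𝒬`. -/
def G_Q : SimpleGraph (Fin 11) where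
  Adj u v := (u, v) ∈ qEdgeList ∨ (v, u) ∈ qEdgeList
  symm := ⟨fun u v h => h.symm⟩
  loopless := ⟨by intro v; fin_cases v <;> decide⟩

instance : DecidableRel G_Q.Adj :=
  fun u v => inferInstanceAs (Decidable ((u, v) ∈ qEdgeList ∨ (v, u) ∈ qEdgeList))

/-- There is no graph isomorphism between `G_P` and `G_Q`: no bijection of `Fin 11`
maps the edge set of `G_P` onto the edge set of `G_Q`. -/
theorem stmt_10 :
    ¬ ∃ φ : Equiv.Perm (Fin 11), ∀ u v : Fin 11, G_P.Adj u v ↔ G_Q.Adj (φ u) (φ v) := by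
  rintro ⟨φ, h⟩
  have hdeg : ∀ u : Fin 11,
      (Finset.univ.filter (fun v => G_P.Adj u v)).card
        = (Finset.univ.filter (fun v => G_Q.Adj (φ u) v)).card := by
    intro u
    apply Finset.card_bij (fun v _ => φ v)
    · intro v hv
      simp only [Finset.mem_filter, Finset.mem_univ, true_and] at hv ⊢
      exact (h u v).mp hv
    · intro a _ b _ hab
      exact φ.injective hab
    · intro b hb
      simp only [Finset.mem_filter, Finset.mem_univ, true_and] at hb ⊢
      exact ⟨φ.symm b, by rw [h u (φ.symm b), φ.apply_symm_apply]; exact hb, φ.apply_symm_apply b⟩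
  have hcount :
      (Finset.univ.filter (fun u : Fin 11 =>
        (Finset.univ.filter (fun v => G_P.Adj u v)).card = 6)).card
      = (Finset.univ.filter (fun u : Fin 11 =>
        (Finset.univ.filter (fun v => G_Q.Adj u v)).card = 6)).card := by
    apply Finset.card_bij (fun u _ => φ u)
    · intro u hu
      simp only [Finset.mem_filter, Finset.mem_univ, true_and] at hu ⊢
      rw [← hdeg u]; exact hu
    · intro a _ b _ hab
      exact φ.injective hab
    · intro b hb
      simp only [Finset.mem_filter, Finset.mem_univ, true_and] at hb ⊢
      refine ⟨φ.symm b, ?_, by simp⟩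
      rw [hdeg (φ.symm b)]; simpa
  revert hcount
  decide
end

section
/- In G_P, the non-adjacent pair {c,e} is a diagonal of exactly three distinct 4-belts (namely {b,c,d,e}, {a,c,e,i} and {b,c,e,i}), whereas in G_Q every non-adjacent vertex pair is a diagonal of at most one 4-belt. -/
/-- search space -/
def beltF (G : SimpleGraph (Fin 11)) [DecidableRel G.Adj] (u v : Fin 11) :
    Finset (Finset (Fin 11)) :=
  ((Finset.univ : Finset (Fin 11 × Fin 11)).filter fun p =>
    ({u, p.1, v, p.2} : Finset (Fin 11)).card = 4 ∧ G.Adj u p.1 ∧ G.Adj p.1 v ∧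
      G.Adj v p.2 ∧ G.Adj p.2 u ∧ ¬ G.Adj u v ∧ ¬ G.Adj p.1 p.2).image
    fun p => ({u, p.1, v, p.2} : Finset (Fin 11))

lemma pair_eq {α : Type*} {u v w y : α} (huv : u ≠ v)
    (h : ({u, v} : Set α) = {w, y}) : (u = w ∧ v = y) ∨ (u = y ∧ v = w) := by
  have hu : u = w ∨ u = y := by
    have : u ∈ ({w, y} : Set α) := h ▸ (by simp)
    simpa using this
  have hv : v = w ∨ v = y := by
    have : v ∈ ({w, y} : Set α) := h ▸ (by simp)
    simpa using this
  rcases hu with rfl | rfl <;> rcases hv with h' | h' <;> tauto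

lemma diag_iff (G : SimpleGraph (Fin 11)) [DecidableRel G.Adj] {u v : Fin 11}
    (huv : u ≠ v) (B : Set (Fin 11)) :
    IsDiagonalOfBelt G u v B ↔
      ∃ x z : Fin 11, B = ↑({u, x, v, z} : Finset (Fin 11)) ∧
        ({u, x, v, z} : Finset (Fin 11)).card = 4 ∧ G.Adj u x ∧ G.Adj x v ∧
        G.Adj v z ∧ G.Adj z u ∧ ¬ G.Adj u v ∧ ¬ G.Adj x z := by
  constructor
  · rintro ⟨w, x, y, z, hB, hc, a1, a2, a3, a4, n1, n2, hd | hd⟩ <;>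
      rcases pair_eq huv hd with ⟨rfl, rfl⟩ | ⟨rfl, rfl⟩
    · exact ⟨x, z, by rw [hB]; ext a; simp, by
        rw [← Set.ncard_coe_finset]
        have : (↑({u, x, v, z} : Finset (Fin 11)) : Set (Fin 11)) = B := by
          rw [hB]; ext a; simp; try tauto
        rw [this]; exact hc, a1, a2, a3, a4, fun h => n1 h, n2⟩
    · exact ⟨z, x, by rw [hB]; ext a; simp; try tauto, by
        rw [← Set.ncard_coe_finset]
        have : (↑({u, z, v, x} : Finset (Fin 11)) : Set (Fin 11)) = B := by
          rw [hB]; ext a; simp; try tauto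
        rw [this]; exact hc, a3, a4, a1, a2, fun h => n1 h.symm, fun h => n2 h.symm⟩
    · exact ⟨y, w, by rw [hB]; ext a; simp; try tauto, by
        rw [← Set.ncard_coe_finset]
        have : (↑({u, y, v, w} : Finset (Fin 11)) : Set (Fin 11)) = B := by
          rw [hB]; ext a; simp; try tauto
        rw [this]; exact hc, a2, a3, a4, a1, n2, fun h => n1 h.symm⟩
    · exact ⟨w, y, by rw [hB]; ext a; simp; try tauto, by
        rw [← Set.ncard_coe_finset]
        have : (↑({u, w, v, y} : Finset (Fin 11)) : Set (Fin 11)) = B := by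
          rw [hB]; ext a; simp; try tauto
        rw [this]; exact hc, a4, a1, a2, a3, fun h => n2 h.symm, n1⟩
  · rintro ⟨x, z, hB, hc, a1, a2, a3, a4, n1, n2⟩
    exact ⟨u, x, v, z, by rw [hB]; ext a; simp, by
      rw [hB, Set.ncard_coe_finset]; exact hc, a1, a2, a3, a4, n1, n2, Or.inl rfl⟩

lemma setOf_diag_eq (G : SimpleGraph (Fin 11)) [DecidableRel G.Adj] {u v : Fin 11}
    (huv : u ≠ v) :
    {B : Set (Fin 11) | IsDiagonalOfBelt G u v B} =
      (fun s : Finset (Fin 11) => (↑s : Set (Fin 11))) '' ↑(beltF G u v) := by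
  ext B
  simp only [Set.mem_setOf_eq, diag_iff G huv, beltF, Set.mem_image,
    Finset.coe_image, Finset.coe_filter, Set.mem_image, Set.mem_setOf_eq,
    Finset.mem_univ, true_and, Prod.exists]
  constructor
  · rintro ⟨x, z, hB, h⟩
    exact ⟨_, ⟨x, z, h, rfl⟩, hB.symm⟩
  · rintro ⟨s, ⟨x, z, h, rfl⟩, hB⟩
    exact ⟨x, z, hB.symm, h⟩

set_option maxHeartbeats 2000000 in
/-- In `G_P` the non-adjacent pair {c,e} is a diagonal of exactly three distinct
4-belts (namely {b,c,d,e}, {a,c,e,i} and {b,c,e,i}), whereas in `G_Q` every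
non-adjacent vertex pair is a diagonal of at most one 4-belt. -/
theorem stmt_11 :
    (¬ G_P.Adj 2 4 ∧
      {B : Set (Fin 11) | IsDiagonalOfBelt G_P 2 4 B} =
        {({1, 2, 3, 4} : Set (Fin 11)), {0, 2, 4, 8}, {1, 2, 4, 8}} ∧
      {B : Set (Fin 11) | IsDiagonalOfBelt G_P 2 4 B}.ncard = 3) ∧
    (∀ u v : Fin 11, u ≠ v → ¬ G_Q.Adj u v →
      {B : Set (Fin 11) | IsDiagonalOfBelt G_Q u v B}.ncard ≤ 1) := by
  have h24 : (2 : Fin 11) ≠ 4 := by decide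
  have hF : beltF G_P 2 4 =
      {({1, 2, 3, 4} : Finset (Fin 11)), {0, 2, 4, 8}, {1, 2, 4, 8}} := by decide
  have hQ : ∀ u v : Fin 11, (beltF G_Q u v).card ≤ 1 := by decide
  refine ⟨⟨by decide, ?_, ?_⟩, ?_⟩
  · rw [setOf_diag_eq G_P h24, hF]
    simp only [Finset.coe_insert, Finset.coe_singleton, Set.image_insert_eq,
      Set.image_singleton]
  · rw [setOf_diag_eq G_P h24,
      Set.ncard_image_of_injective _ Finset.coe_injective, Set.ncard_coe_finset, hF]
    decide
  · intro u v huv _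
    rw [setOf_diag_eq G_Q huv,
      Set.ncard_image_of_injective _ Finset.coe_injective, Set.ncard_coe_finset]
    exact hQ u v
end

section
/- The sum over all 3-element vertex subsets σ of (c(σ) − 1), where c(σ) is the number of connected components of the induced subgraph on σ, equals 105 for G_P, and the same sum equals 105 for G_Q. -/
section Helpers

open SimpleGraph

variable {V : Type} {H : SimpleGraph V}

lemma isolated_reachable {z u : V} (hz : ∀ w, ¬H.Adj z w) (h : H.Reachable u z) : u = z := by
  obtain ⟨w⟩ := h.symm
  cases w with
  | nil => rfl
  | cons h' _ => exact absurd h' (hz _)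

lemma card_comp_no_edges (h : ∀ u v, ¬H.Adj u v) :
    Nat.card H.ConnectedComponent = Nat.card V :=
  (Nat.card_eq_of_bijective H.connectedComponentMk
    ⟨fun u v huv => isolated_reachable (h v) (SimpleGraph.ConnectedComponent.exact huv),
     Quot.mk_surjective⟩).symm

lemma card_comp_connected [Nonempty V] (h : H.Preconnected) :
    Nat.card H.ConnectedComponent = 1 :=
  Nat.card_eq_one_iff_unique.mpr
    ⟨h.subsingleton_connectedComponent,
     ⟨H.connectedComponentMk (Classical.arbitrary V)⟩⟩

lemma card_comp_two [DecidableEq V] {x y z : V} (hxy : H.Adj x y)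
    (hz : ∀ w, ¬H.Adj z w) (hcov : ∀ v : V, v = x ∨ v = y ∨ v = z) :
    Nat.card H.ConnectedComponent = 2 := by
  have hxz : x ≠ z := fun h => hz y (h ▸ hxy)
  have hyz : y ≠ z := fun h => hz x (h ▸ hxy.symm)
  have resp : ∀ (u v : V), H.Reachable u v → decide (u = z) = decide (v = z) := by
    intro u v h
    by_cases hu : u = z
    · subst hu
      rw [isolated_reachable hz h.symm]
    · by_cases hv : v = z
      · subst hv
        exact absurd (isolated_reachable hz h) hu
      · simp [hu, hv]
  let f : H.ConnectedComponent → Bool :=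
    SimpleGraph.ConnectedComponent.lift (fun v => decide (v = z))
      (fun v w p _ => resp v w ⟨p⟩)
  have hbij : Function.Bijective f := by
    constructor
    · refine SimpleGraph.ConnectedComponent.ind₂ (fun u v h => ?_)
      have h' : decide (u = z) = decide (v = z) := h
      rcases hcov u with rfl | rfl | rfl <;> rcases hcov v with rfl | rfl | rfl <;>
        first
          | rfl
          | exact SimpleGraph.ConnectedComponent.sound hxy.reachable
          | exact SimpleGraph.ConnectedComponent.sound hxy.symm.reachable
          | simp [hxz, hyz] at h'
    · intro b
      cases b
      · exact ⟨H.connectedComponentMk x, by simp [f, hxz]⟩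
      · exact ⟨H.connectedComponentMk z, by simp [f]⟩
  rw [Nat.card_eq_of_bijective f hbij]
  simp [Nat.card_eq_fintype_card]

end Helpers
lemma key_card (G : SimpleGraph (Fin 11)) [DecidableRel G.Adj] {σ : Finset (Fin 11)}
    (hσ : σ.card = 3) :
    Nat.card (SimpleGraph.induce (↑σ : Set (Fin 11)) G).ConnectedComponent - 1
      = 2 - min 2 ((∑ u ∈ σ, (σ.filter (G.Adj u)).card) / 2) := by
  obtain ⟨x, y, z, hxy', hxz', hyz', rfl⟩ := Finset.card_eq_three.mp hσ
  set S : Set (Fin 11) := (↑({x, y, z} : Finset (Fin 11)) : Set (Fin 11)) with hS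
  set H : SimpleGraph S := SimpleGraph.induce S G with hH
  have hxS : x ∈ S := by simp [hS]
  have hyS : y ∈ S := by simp [hS]
  have hzS : z ∈ S := by simp [hS]
  set X : S := ⟨x, hxS⟩
  set Y : S := ⟨y, hyS⟩
  set Z : S := ⟨z, hzS⟩
  have hcov : ∀ v : S, v = X ∨ v = Y ∨ v = Z := by
    rintro ⟨v, hv⟩
    simp only [hS, Finset.coe_insert, Set.mem_insert_iff, Finset.coe_singleton,
      Set.mem_singleton_iff] at hv
    rcases hv with rfl | rfl | rfl
    · exact Or.inl rfl
    · exact Or.inr (Or.inl rfl)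
    · exact Or.inr (Or.inr rfl)
  have hAdj : ∀ u v : S, H.Adj u v ↔ G.Adj u.1 v.1 := fun u v => Iff.rfl
  have hxx : ¬ G.Adj x x := G.irrefl
  have hyy : ¬ G.Adj y y := G.irrefl
  have hzz : ¬ G.Adj z z := G.irrefl
  have hyx : G.Adj y x ↔ G.Adj x y := G.adj_comm y x
  have hzx : G.Adj z x ↔ G.Adj x z := G.adj_comm z x
  have hzy : G.Adj z y ↔ G.Adj y z := G.adj_comm z y
  have hne : Nonempty S := ⟨X⟩
  have hxm : x ∉ ({y, z} : Finset (Fin 11)) := by simp [hxy', hxz']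
  have hym : y ∉ ({z} : Finset (Fin 11)) := by simp [hyz']
  rw [Finset.sum_insert hxm, Finset.sum_insert hym, Finset.sum_singleton]
  by_cases hxy : G.Adj x y <;> by_cases hxz : G.Adj x z <;> by_cases hyz : G.Adj y z
  -- case TTT
  · have rxy : H.Reachable X Y := ((hAdj X Y).mpr hxy).reachable
    have rxz : H.Reachable X Z := ((hAdj X Z).mpr hxz).reachable
    have hpre : H.Preconnected := by
      intro u v
      rcases hcov u with rfl | rfl | rfl <;> rcases hcov v with rfl | rfl | rfl <;>
        first
        | exact SimpleGraph.Reachable.refl _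
        | exact rxy | exact rxy.symm | exact rxz | exact rxz.symm
        | exact rxy.symm.trans rxz | exact rxz.symm.trans rxy
    rw [card_comp_connected hpre]
    simp [Finset.filter_insert, Finset.filter_singleton, hxy, hxz, hyz, hyx, hzx, hzy,
      hxx, hyy, hzz, hxy', hxz', hyz', hxy'.symm, hxz'.symm, hyz'.symm]
  -- case TTF
  · have rxy : H.Reachable X Y := ((hAdj X Y).mpr hxy).reachable
    have rxz : H.Reachable X Z := ((hAdj X Z).mpr hxz).reachable
    have hpre : H.Preconnected := by
      intro u v
      rcases hcov u with rfl | rfl | rfl <;> rcases hcov v with rfl | rfl | rfl <;>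
        first
        | exact SimpleGraph.Reachable.refl _
        | exact rxy | exact rxy.symm | exact rxz | exact rxz.symm
        | exact rxy.symm.trans rxz | exact rxz.symm.trans rxy
    rw [card_comp_connected hpre]
    simp [Finset.filter_insert, Finset.filter_singleton, hxy, hxz, hyz, hyx, hzx, hzy,
      hxx, hyy, hzz, hxy', hxz', hyz', hxy'.symm, hxz'.symm, hyz'.symm]
  -- case TFT
  · have rxy : H.Reachable X Y := ((hAdj X Y).mpr hxy).reachable
    have ryz : H.Reachable Y Z := ((hAdj Y Z).mpr hyz).reachable
    have hpre : H.Preconnected := by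
      intro u v
      rcases hcov u with rfl | rfl | rfl <;> rcases hcov v with rfl | rfl | rfl <;>
        first
        | exact SimpleGraph.Reachable.refl _
        | exact rxy | exact rxy.symm | exact ryz | exact ryz.symm
        | exact rxy.trans ryz | exact (rxy.trans ryz).symm
    rw [card_comp_connected hpre]
    simp [Finset.filter_insert, Finset.filter_singleton, hxy, hxz, hyz, hyx, hzx, hzy,
      hxx, hyy, hzz, hxy', hxz', hyz', hxy'.symm, hxz'.symm, hyz'.symm]
  -- case TFF : edge xy, z isolated
  · have hz : ∀ w : S, ¬H.Adj Z w := by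
      intro w hw
      rcases hcov w with rfl | rfl | rfl
      · exact hxz ((hAdj Z X).mp hw).symm
      · exact hyz ((hAdj Z Y).mp hw).symm
      · exact H.loopless.irrefl Z hw
    rw [card_comp_two ((hAdj X Y).mpr hxy) hz hcov]
    simp [Finset.filter_insert, Finset.filter_singleton, hxy, hxz, hyz, hyx, hzx, hzy,
      hxx, hyy, hzz, hxy', hxz', hyz', hxy'.symm, hxz'.symm, hyz'.symm]
  -- case FTT
  · have rxz : H.Reachable X Z := ((hAdj X Z).mpr hxz).reachable
    have ryz : H.Reachable Y Z := ((hAdj Y Z).mpr hyz).reachable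
    have hpre : H.Preconnected := by
      intro u v
      rcases hcov u with rfl | rfl | rfl <;> rcases hcov v with rfl | rfl | rfl <;>
        first
        | exact SimpleGraph.Reachable.refl _
        | exact rxz | exact rxz.symm | exact ryz | exact ryz.symm
        | exact rxz.trans ryz.symm | exact (rxz.trans ryz.symm).symm
    rw [card_comp_connected hpre]
    simp [Finset.filter_insert, Finset.filter_singleton, hxy, hxz, hyz, hyx, hzx, hzy,
      hxx, hyy, hzz, hxy', hxz', hyz', hxy'.symm, hxz'.symm, hyz'.symm]
  -- case FTF : edge xz, y isolated
  · have hy : ∀ w : S, ¬H.Adj Y w := by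
      intro w hw
      rcases hcov w with rfl | rfl | rfl
      · exact hxy ((hAdj Y X).mp hw).symm
      · exact H.loopless.irrefl Y hw
      · exact hyz ((hAdj Y Z).mp hw)
    have hcov' : ∀ v : S, v = X ∨ v = Z ∨ v = Y := by
      intro v; rcases hcov v with h | h | h <;> tauto
    rw [card_comp_two ((hAdj X Z).mpr hxz) hy hcov']
    simp [Finset.filter_insert, Finset.filter_singleton, hxy, hxz, hyz, hyx, hzx, hzy,
      hxx, hyy, hzz, hxy', hxz', hyz', hxy'.symm, hxz'.symm, hyz'.symm]
  -- case FFT : edge yz, x isolated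
  · have hx : ∀ w : S, ¬H.Adj X w := by
      intro w hw
      rcases hcov w with rfl | rfl | rfl
      · exact H.loopless.irrefl X hw
      · exact hxy ((hAdj X Y).mp hw)
      · exact hxz ((hAdj X Z).mp hw)
    have hcov' : ∀ v : S, v = Y ∨ v = Z ∨ v = X := by
      intro v; rcases hcov v with h | h | h <;> tauto
    rw [card_comp_two ((hAdj Y Z).mpr hyz) hx hcov']
    simp [Finset.filter_insert, Finset.filter_singleton, hxy, hxz, hyz, hyx, hzx, hzy,
      hxx, hyy, hzz, hxy', hxz', hyz', hxy'.symm, hxz'.symm, hyz'.symm]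
  -- case FFF
  · have hno : ∀ u v : S, ¬H.Adj u v := by
      intro u v h
      rcases hcov u with rfl | rfl | rfl <;> rcases hcov v with rfl | rfl | rfl <;>
        first
        | exact G.loopless.irrefl _ h
        | exact hxy h | exact hxz h | exact hyz h
        | exact hxy h.symm | exact hxz h.symm | exact hyz h.symm
    rw [card_comp_no_edges hno, Nat.card_coe_set_eq, Set.ncard_coe_finset, hσ]
    simp [Finset.filter_insert, Finset.filter_singleton, hxy, hxz, hyz, hyx, hzx, hzy,
      hxx, hyy, hzz, hxy', hxz', hyz', hxy'.symm, hxz'.symm, hyz'.symm]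
set_option maxRecDepth 40000

/-- The sum over all 3-element vertex subsets σ of (c(σ) − 1), where c(σ) is the
number of connected components of the induced subgraph on σ, equals 105 for both
`G_P` and `G_Q`. -/
theorem stmt_12 :
    (∑ σ ∈ Finset.powersetCard 3 (Finset.univ : Finset (Fin 11)),
        (Nat.card (SimpleGraph.induce (↑σ : Set (Fin 11)) G_P).ConnectedComponent - 1))
      = 105 ∧
    (∑ σ ∈ Finset.powersetCard 3 (Finset.univ : Finset (Fin 11)),
        (Nat.card (SimpleGraph.induce (↑σ : Set (Fin 11)) G_Q).ConnectedComponent - 1))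
      = 105 := by
  constructor
  · rw [Finset.sum_congr rfl
      (fun σ hσ => key_card G_P (Finset.mem_powersetCard.mp hσ).2)]
    decide
  · rw [Finset.sum_congr rfl
      (fun σ hσ => key_card G_Q (Finset.mem_powersetCard.mp hσ).2)]
    decide
end

section
/- The sum over all 7-element vertex subsets σ of (c(σ) − 1), where c(σ) is the number of connected components of the induced subgraph on σ, equals 4 for G_P, and the same sum equals 4 for G_Q. -/
open Finset

section ListBFS

variable {α : Type*} [LinearOrder α] (adj : α → α → Bool)

/-- One BFS expansion step, restricted to the universe list `l`. -/
def stepL (l s : List α) : List α :=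
  l.filter (fun v => s.any (fun u => decide (u = v)) || s.any (fun u => adj u v))

/-- Reachability closure of `u` inside the universe list `l`. -/
def closureL (l : List α) (u : α) : List α := (stepL adj l)^[l.length] [u]

/-- Number of vertices that are minimal in their BFS closure. -/
def countL (l : List α) : ℕ :=
  (l.filter (fun v => (closureL adj l v).all (fun u => decide (v ≤ u)))).length

lemma stepL_subset (l s : List α) : stepL adj l s ⊆ l :=
  List.filter_subset' _

lemma stepL_mono (l : List α) {s t : List α} (h : s ⊆ t) :
    stepL adj l s ⊆ stepL adj l t := by
  intro x hx
  rw [stepL, List.mem_filter] at hx ⊢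
  refine ⟨hx.1, ?_⟩
  rcases Bool.or_eq_true_iff.mp hx.2 with h2 | h2 <;>
    obtain ⟨u, hu, hu2⟩ := List.any_eq_true.mp h2
  · exact Bool.or_eq_true_iff.mpr (Or.inl (List.any_eq_true.mpr ⟨u, h hu, hu2⟩))
  · exact Bool.or_eq_true_iff.mpr (Or.inr (List.any_eq_true.mpr ⟨u, h hu, hu2⟩))

lemma iter_stepL_mono (l : List α) {s t : List α} (h : s ⊆ t) (k : ℕ) :
    (stepL adj l)^[k] s ⊆ (stepL adj l)^[k] t := by
  induction k generalizing s t with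
  | zero => simpa
  | succ k ih =>
    rw [Function.iterate_succ_apply, Function.iterate_succ_apply]
    exact ih (stepL_mono adj l h)

lemma subset_stepL (l : List α) {s : List α} (hs : s ⊆ l) : s ⊆ stepL adj l s := by
  intro x hx
  rw [stepL, List.mem_filter]
  exact ⟨hs hx, Bool.or_eq_true_iff.mpr (Or.inl (List.any_eq_true.mpr
    ⟨x, hx, decide_eq_true rfl⟩))⟩

lemma iter_stepL_subset_l (l : List α) {s : List α} (hs : s ⊆ l) (k : ℕ) :
    (stepL adj l)^[k] s ⊆ l := by
  cases k with
  | zero => exact hs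
  | succ k =>
    rw [Function.iterate_succ_apply']
    exact stepL_subset adj l _

lemma iter_stepL_le (l : List α) {s : List α} (hs : s ⊆ l) {k m : ℕ} (h : k ≤ m) :
    (stepL adj l)^[k] s ⊆ (stepL adj l)^[m] s := by
  induction h with
  | refl => exact fun x hx => hx
  | step h ih =>
    refine fun x hx => ?_
    rw [Function.iterate_succ_apply']
    exact subset_stepL adj l (iter_stepL_subset_l adj l hs _) (ih hx)

end ListBFS

section Correct

variable {α : Type*} [Fintype α] [LinearOrder α]
variable (G : SimpleGraph α) [DecidableRel G.Adj]
variable (adj : α → α → Bool) (hadj : ∀ u v, adj u v = true ↔ G.Adj u v)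
variable (σ : Finset α) (l : List α)
variable (hnd : l.Nodup) (hl : ∀ x, x ∈ l ↔ x ∈ σ)


include hadj hnd hl

lemma sound_iter (u0 : ↥(↑σ : Set α)) :
    ∀ (k : ℕ) (s : List α),
      (∀ x ∈ s, ∃ hx : x ∈ (↑σ : Set α), (SimpleGraph.induce (↑σ : Set α) G).Reachable u0 ⟨x, hx⟩) →
      ∀ v ∈ (stepL adj l)^[k] s,
        ∃ hv : v ∈ (↑σ : Set α), (SimpleGraph.induce (↑σ : Set α) G).Reachable u0 ⟨v, hv⟩ := by
  intro k
  induction k with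
  | zero => exact fun s hs v hv => hs v hv
  | succ k ih =>
    intro s hs v hv
    rw [Function.iterate_succ_apply] at hv
    refine ih (stepL adj l s) ?_ v hv
    intro x hx
    rw [stepL, List.mem_filter] at hx
    have hxσ : x ∈ (↑σ : Set α) := Finset.mem_coe.mpr ((hl _).mp hx.1)
    rcases Bool.or_eq_true_iff.mp hx.2 with h2 | h2 <;>
      obtain ⟨u, hu, hu2⟩ := List.any_eq_true.mp h2
    · have : u = x := of_decide_eq_true hu2
      subst this
      exact hs u hu
    · obtain ⟨hu', hr⟩ := hs u hu
      have hGadj : G.Adj u x := (hadj u x).mp hu2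
      exact ⟨hxσ, hr.trans (SimpleGraph.Adj.reachable
        (show (SimpleGraph.induce (↑σ : Set α) G).Adj ⟨u, hu'⟩ ⟨x, hxσ⟩ from hGadj))⟩

lemma walk_mem_iterL {a b : ↥(↑σ : Set α)} (w : (SimpleGraph.induce (↑σ : Set α) G).Walk a b) :
    ↑b ∈ (stepL adj l)^[w.length] [(↑a : α)] := by
  induction w with
  | nil => simp
  | @cons a c b h w ih =>
    rw [SimpleGraph.Walk.length_cons, Function.iterate_succ_apply]
    refine iter_stepL_mono adj l ?_ _ ih
    intro x hx
    rw [List.mem_singleton] at hx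
    subst hx
    rw [stepL, List.mem_filter]
    refine ⟨(hl _).mpr (Finset.mem_coe.mp c.2), ?_⟩
    refine Bool.or_eq_true_iff.mpr (Or.inr (List.any_eq_true.mpr
      ⟨↑a, List.mem_singleton_self _, ?_⟩))
    exact (hadj _ _).mpr (show G.Adj ↑a ↑c from h)

lemma mem_closureL_iff (a b : ↥(↑σ : Set α)) :
    (↑b : α) ∈ closureL adj l ↑a ↔ (SimpleGraph.induce (↑σ : Set α) G).Reachable a b := by
  constructor
  · intro hb
    obtain ⟨hv, hr⟩ := sound_iter G adj hadj σ l hnd hl a _ [(↑a : α)]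
      (fun x hx => by
        rw [List.mem_singleton] at hx
        subst hx
        exact ⟨a.2, SimpleGraph.Reachable.refl _⟩) ↑b hb
    have : (⟨↑b, hv⟩ : ↥(↑σ : Set α)) = b := Subtype.ext rfl
    rwa [this] at hr
  · intro h
    refine h.elim_path fun p => ?_
    have hcard : Fintype.card ↥(↑σ : Set α) = σ.card := by
      rw [← Nat.card_eq_fintype_card, Nat.card_coe_set_eq, Set.ncard_coe_finset]
    have hlen : l.length = σ.card := by
      rw [← List.toFinset_card_of_nodup hnd]
      congr 1
      ext x
      rw [List.mem_toFinset, hl]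
    have hll : p.1.length ≤ l.length := by
      rw [hlen]
      exact le_of_lt (hcard ▸ p.2.length_lt)
    have ha : [(↑a : α)] ⊆ l := by
      intro x hx
      rw [List.mem_singleton] at hx
      subst hx
      exact (hl _).mpr (Finset.mem_coe.mp a.2)
    exact iter_stepL_le adj l ha hll (walk_mem_iterL G adj hadj σ l hnd hl p.1)

lemma mem_closureL_sigma {a : ↥(↑σ : Set α)} {v : α}
    (hv : v ∈ closureL adj l ↑a) :
    ∃ hvσ : v ∈ (↑σ : Set α), (SimpleGraph.induce (↑σ : Set α) G).Reachable a ⟨v, hvσ⟩ :=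
  sound_iter G adj hadj σ l hnd hl a _ [(↑a : α)]
    (fun x hx => by
      rw [List.mem_singleton] at hx
      subst hx
      exact ⟨a.2, SimpleGraph.Reachable.refl _⟩) v hv

lemma countL_eq :
    Nat.card (SimpleGraph.induce (↑σ : Set α) G).ConnectedComponent = countL adj l := by
  classical
  rw [Nat.card_eq_fintype_card, ← Finset.card_univ, countL]
  set p : α → Bool :=
    fun v => (closureL adj l v).all (fun u => decide (v ≤ u)) with hp
  have hnd2 : (l.filter p).Nodup := hnd.filter _
  rw [← List.toFinset_card_of_nodup hnd2]
  -- membership helper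
  have hmem : ∀ a ∈ (l.filter p).toFinset, a ∈ (↑σ : Set α) := by
    intro a ha
    rw [List.mem_toFinset, List.mem_filter] at ha
    exact Finset.mem_coe.mpr ((hl _).mp ha.1)
  have hpchar : ∀ (a : ↥(↑σ : Set α)),
      p ↑a = true ↔ ∀ u : ↥(↑σ : Set α), (SimpleGraph.induce (↑σ : Set α) G).Reachable a u → (↑a : α) ≤ ↑u := by
    intro a
    rw [hp, List.all_eq_true]
    constructor
    · intro h u hu
      exact of_decide_eq_true (h ↑u ((mem_closureL_iff G adj hadj σ l hnd hl a u).mpr hu))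
    · intro h x hx
      obtain ⟨hxσ, hr⟩ := mem_closureL_sigma G adj hadj σ l hnd hl hx
      exact decide_eq_true (h ⟨x, hxσ⟩ hr)
  symm
  apply Finset.card_bij
    (fun a ha => (SimpleGraph.induce (↑σ : Set α) G).connectedComponentMk ⟨a, hmem a ha⟩)
  · intro a ha; exact Finset.mem_univ _
  · intro a ha b hb h
    rw [SimpleGraph.ConnectedComponent.eq] at h
    have hpa : p a = true := (List.mem_filter.mp (List.mem_toFinset.mp ha)).2
    have hpb : p b = true := (List.mem_filter.mp (List.mem_toFinset.mp hb)).2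
    exact le_antisymm
      ((hpchar ⟨a, hmem a ha⟩).mp hpa _ h)
      ((hpchar ⟨b, hmem b hb⟩).mp hpb _ h.symm)
  · intro c _
    obtain ⟨x, rfl⟩ := c.exists_rep
    have hxmem : (↑x : α) ∈ closureL adj l ↑x :=
      (mem_closureL_iff G adj hadj σ l hnd hl x x).mpr (SimpleGraph.Reachable.refl _)
    have hne : (closureL adj l ↑x).toFinset.Nonempty :=
      ⟨↑x, List.mem_toFinset.mpr hxmem⟩
    set m := (closureL adj l ↑x).toFinset.min' hne with hm
    have hmmem : m ∈ closureL adj l ↑x :=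
      List.mem_toFinset.mp ((closureL adj l ↑x).toFinset.min'_mem hne)
    obtain ⟨hmσ, hmr⟩ := mem_closureL_sigma G adj hadj σ l hnd hl hmmem
    have hminf : m ∈ (l.filter p).toFinset := by
      rw [List.mem_toFinset, List.mem_filter]
      refine ⟨(hl _).mpr (Finset.mem_coe.mp hmσ), ?_⟩
      refine (hpchar ⟨m, hmσ⟩).mpr ?_
      intro u hu
      have : (SimpleGraph.induce (↑σ : Set α) G).Reachable x u := hmr.trans hu
      exact (closureL adj l ↑x).toFinset.min'_le ↑u
        (List.mem_toFinset.mpr ((mem_closureL_iff G adj hadj σ l hnd hl x u).mpr this))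
    exact ⟨m, hminf, SimpleGraph.ConnectedComponent.sound hmr.symm⟩

end Correct




def lfin (σ : Finset (Fin 11)) : List (Fin 11) :=
  (List.finRange 11).filter (fun x => decide (x ∈ σ))

lemma lfin_nodup (σ : Finset (Fin 11)) : (lfin σ).Nodup :=
  (List.nodup_finRange 11).filter _

lemma lfin_mem (σ : Finset (Fin 11)) (x : Fin 11) : x ∈ lfin σ ↔ x ∈ σ := by
  rw [lfin, List.mem_filter]
  simp [List.mem_finRange]

lemma keyP (σ : Finset (Fin 11)) :
    Nat.card (SimpleGraph.induce (↑σ : Set (Fin 11)) G_P).ConnectedComponent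
      = countL (fun a b => decide (G_P.Adj a b)) (lfin σ) :=
  countL_eq G_P (fun a b => decide (G_P.Adj a b)) (fun _ _ => decide_eq_true_iff) σ
    (lfin σ) (lfin_nodup σ) (lfin_mem σ)

lemma keyQ (σ : Finset (Fin 11)) :
    Nat.card (SimpleGraph.induce (↑σ : Set (Fin 11)) G_Q).ConnectedComponent
      = countL (fun a b => decide (G_Q.Adj a b)) (lfin σ) :=
  countL_eq G_Q (fun a b => decide (G_Q.Adj a b)) (fun _ _ => decide_eq_true_iff) σ
    (lfin σ) (lfin_nodup σ) (lfin_mem σ)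

set_option maxHeartbeats 1600000 in
set_option maxRecDepth 100000 in
lemma sumP :
    (∑ σ ∈ Finset.powersetCard 7 (Finset.univ : Finset (Fin 11)),
        (countL (fun a b => decide (G_P.Adj a b)) (lfin σ) - 1)) = 4 := by
  decide

set_option maxHeartbeats 1600000 in
set_option maxRecDepth 100000 in
lemma sumQ :
    (∑ σ ∈ Finset.powersetCard 7 (Finset.univ : Finset (Fin 11)),
        (countL (fun a b => decide (G_Q.Adj a b)) (lfin σ) - 1)) = 4 := by
  decide


/-- The sum over all 7-element vertex subsets σ of (c(σ) − 1), where c(σ) is the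
number of connected components of the induced subgraph on σ, equals 4 for both
`G_P` and `G_Q`. -/
theorem stmt_16 :
    (∑ σ ∈ Finset.powersetCard 7 (Finset.univ : Finset (Fin 11)),
        (Nat.card (SimpleGraph.induce (↑σ : Set (Fin 11)) G_P).ConnectedComponent - 1))
      = 4 ∧
    (∑ σ ∈ Finset.powersetCard 7 (Finset.univ : Finset (Fin 11)),
        (Nat.card (SimpleGraph.induce (↑σ : Set (Fin 11)) G_Q).ConnectedComponent - 1))
      = 4 := by
  simp only [keyP, keyQ]
  exact ⟨sumP, sumQ⟩
end
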